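/- Let α > 2, s > 0, p ∈ (0,1), and set δ = 2/α. Then the function x ↦ 1/( p/(1 + s·‖x‖^(−α)) + (1−p) ) − 1 = p·s/(‖x‖^α + (1−p)·s) is Lebesgue integrable on ℝ² and ∫_{ℝ²} p·s/(‖x‖^α + (1−p)·s) dx = π·C(δ)·p·s^δ/(1−p)^(1−δ), where C(δ) = πδ/sin(πδ). -/

import Mathlib

open MeasureTheory Set Real

lemma beta_val (a : ℝ) (h0 : 0 < a) (h1 : a < 1) :
    ∫ x in (0:ℝ)..1, x ^ (a-1) * (1-x) ^ (-a) = π / Real.sin (π * a) := by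
  have key : Complex.Gamma a * Complex.Gamma (1 - (a:ℂ)) = Complex.betaIntegral a (1 - a) := by
    have := Complex.Gamma_mul_Gamma_eq_betaIntegral (s := (a:ℂ)) (t := 1 - (a:ℂ))
      (by simpa using h0) (by simp [Complex.sub_re]; linarith)
    simpa [Complex.Gamma_one] using this
  have hbeta : Complex.betaIntegral a (1 - a) =
      ((∫ x in (0:ℝ)..1, x ^ (a-1) * (1-x) ^ (-a) : ℝ) : ℂ) := by
    rw [Complex.betaIntegral, ← intervalIntegral.integral_ofReal]
    apply intervalIntegral.integral_congr
    intro x hx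
    rw [Set.uIcc_of_le (by norm_num : (0:ℝ) ≤ 1)] at hx
    have hx0 : 0 ≤ x := hx.1
    have hx1 : 0 ≤ 1 - x := by linarith [hx.2]
    show (x:ℂ) ^ ((a:ℂ)-1) * (1-(x:ℂ)) ^ (1-(a:ℂ)-1) = ((x ^ (a-1) * (1-x) ^ (-a) : ℝ) : ℂ)
    rw [show ((a:ℂ)-1) = ((a-1:ℝ):ℂ) by push_cast; ring,
      show (1-(a:ℂ)-1 : ℂ) = ((-a:ℝ):ℂ) by push_cast; ring,
      show (1-(x:ℂ) : ℂ) = ((1-x:ℝ):ℂ) by push_cast; ring,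
      ← Complex.ofReal_cpow hx0, ← Complex.ofReal_cpow hx1, ← Complex.ofReal_mul]
  have hgr : Complex.Gamma a * Complex.Gamma (1 - (a:ℂ)) = ((π / Real.sin (π * a) : ℝ) : ℂ) := by
    have h1c : (1 : ℂ) - (a : ℂ) = ((1 - a : ℝ) : ℂ) := by push_cast; ring
    rw [h1c, Complex.Gamma_ofReal, Complex.Gamma_ofReal, ← Complex.ofReal_mul,
      Real.Gamma_mul_Gamma_one_sub]
  rw [hgr, hbeta] at key
  exact_mod_cast key.symm

lemma g_integrable (a : ℝ) (h0 : 0 < a) (h1 : a < 1) :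
    IntegrableOn (fun x : ℝ => x ^ (a-1) * (1-x) ^ (-a)) (Ioo 0 1) := by
  have hc : IntervalIntegrable (fun x : ℝ =>
      (x:ℂ) ^ ((a:ℂ)-1) * (1-(x:ℂ)) ^ ((1:ℂ)-(a:ℂ)-1)) volume 0 1 :=
    Complex.betaIntegral_convergent (by simpa using h0) (by simp [Complex.sub_re]; linarith)
  have hIoc : IntegrableOn (fun x : ℝ =>
      (x:ℂ) ^ ((a:ℂ)-1) * (1-(x:ℂ)) ^ ((1:ℂ)-(a:ℂ)-1)) (Ioc 0 1) :=
    (intervalIntegrable_iff_integrableOn_Ioc_of_le (by norm_num)).mp hc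
  have hIoo : IntegrableOn (fun x : ℝ =>
      ((x ^ (a-1) * (1-x) ^ (-a) : ℝ) : ℂ)) (Ioo 0 1) := by
    refine (hIoc.mono_set Ioo_subset_Ioc_self).congr_fun ?_ measurableSet_Ioo
    intro x hx
    show (x:ℂ) ^ ((a:ℂ)-1) * (1-(x:ℂ)) ^ (1-(a:ℂ)-1) = ((x ^ (a-1) * (1-x) ^ (-a) : ℝ) : ℂ)
    rw [show ((a:ℂ)-1) = ((a-1:ℝ):ℂ) by push_cast; ring,
      show (1-(a:ℂ)-1 : ℂ) = ((-a:ℝ):ℂ) by push_cast; ring,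
      show (1-(x:ℂ) : ℂ) = ((1-x:ℝ):ℂ) by push_cast; ring,
      ← Complex.ofReal_cpow hx.1.le, ← Complex.ofReal_cpow (by linarith [hx.2] : (0:ℝ) ≤ 1-x),
      ← Complex.ofReal_mul]
  have h2 := hIoo.re
  refine MeasureTheory.IntegrableOn.congr_fun h2 (fun x _ => ?_) measurableSet_Ioo
  simp

lemma key_Ioi (a : ℝ) (h0 : 0 < a) (h1 : a < 1) :
    IntegrableOn (fun t : ℝ => t ^ (a-1) / (1+t)) (Ioi 0) ∧
    ∫ t in Ioi (0:ℝ), t ^ (a-1) / (1+t) = π / Real.sin (π * a) := by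
  set g : ℝ → ℝ := fun x => x ^ (a-1) * (1-x) ^ (-a) with hg
  set f : ℝ → ℝ := fun t => t / (1+t) with hf
  set f' : ℝ → ℝ := fun t => ((1+t)^2)⁻¹ with hf'
  have hd : ∀ t ∈ Ioi (0:ℝ), HasDerivWithinAt f (f' t) (Ioi 0) t := by
    intro t ht
    simp only [mem_Ioi] at ht
    have h1t : (1:ℝ) + t ≠ 0 := by positivity
    have := (hasDerivAt_id t).div ((hasDerivAt_const t 1).add (hasDerivAt_id t)) h1t
    refine (this.congr_deriv ?_).hasDerivWithinAt
    simp only [hf', Pi.add_apply, id]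
    field_simp
    ring
  have hinj : InjOn f (Ioi 0) := by
    intro t1 ht1 t2 ht2 h
    simp only [mem_Ioi] at ht1 ht2
    have h1 : (1:ℝ) + t1 ≠ 0 := by positivity
    have h2 : (1:ℝ) + t2 ≠ 0 := by positivity
    simp only [hf] at h
    field_simp at h
    linarith
  have himg : f '' Ioi 0 = Ioo 0 1 := by
    ext x
    constructor
    · rintro ⟨t, ht, rfl⟩
      simp only [mem_Ioi] at ht
      have h1t : (0:ℝ) < 1 + t := by linarith
      exact ⟨div_pos ht h1t, (div_lt_one h1t).mpr (by linarith)⟩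
    · rintro ⟨hx0, hx1⟩
      refine ⟨x / (1-x), div_pos hx0 (by linarith), ?_⟩
      have hne : (1:ℝ) - x ≠ 0 := by linarith
      simp only [hf]
      field_simp
      ring
  have hpt : ∀ t ∈ Ioi (0:ℝ), |f' t| • g (f t) = t ^ (a-1) / (1+t) := by
    intro t ht
    simp only [mem_Ioi] at ht
    have hb : (0:ℝ) < 1 + t := by linarith
    have e1 : (1:ℝ) - t/(1+t) = (1+t)⁻¹ := by field_simp; ring
    have e2 : (t/(1+t)) ^ (a-1) = t^(a-1) * ((1+t)^(a-1))⁻¹ := by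
      rw [Real.div_rpow ht.le hb.le, div_eq_mul_inv]
    have e3 : ((1+t)⁻¹ : ℝ) ^ (-a) = (1+t)^a := by
      rw [Real.inv_rpow hb.le, Real.rpow_neg hb.le, inv_inv]
    simp only [hf', hg, hf, smul_eq_mul, e1, e2, e3,
      abs_of_pos (inv_pos.mpr (pow_pos hb 2))]
    rw [show ((1+t)^2 : ℝ) = (1+t)^(2:ℝ) by rw [← Real.rpow_natCast (1+t) 2]; norm_num]
    rw [← Real.rpow_neg hb.le, ← Real.rpow_neg hb.le]
    calc (1+t)^(-2:ℝ) * (t^(a-1) * (1+t)^(-(a-1)) * (1+t)^a)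
        = t^(a-1) * ((1+t)^(-2:ℝ) * (1+t)^(-(a-1)) * (1+t)^a) := by ring
      _ = t^(a-1) * (1+t)^((-2) + (-(a-1)) + a) := by
          rw [← Real.rpow_add hb, ← Real.rpow_add hb]
      _ = t^(a-1)/(1+t) := by
          rw [show (-2:ℝ) + (-(a-1)) + a = -1 by ring, Real.rpow_neg_one, div_eq_mul_inv]
  have hiff := integrableOn_image_iff_integrableOn_abs_deriv_smul measurableSet_Ioi hd hinj g
  rw [himg] at hiff
  have hint : IntegrableOn (fun t : ℝ => t ^ (a-1) / (1+t)) (Ioi 0) :=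
    (hiff.mp (g_integrable a h0 h1)).congr_fun hpt measurableSet_Ioi
  refine ⟨hint, ?_⟩
  have himgint := integral_image_eq_integral_abs_deriv_smul measurableSet_Ioi hd hinj g
  rw [himg] at himgint
  rw [← setIntegral_congr_fun measurableSet_Ioi hpt, ← himgint,
    ← MeasureTheory.integral_Ioc_eq_integral_Ioo,
    ← intervalIntegral.integral_of_le (by norm_num : (0:ℝ) ≤ 1)]
  exact beta_val a h0 h1

lemma J_val (α c : ℝ) (hα : 2 < α) (hc : 0 < c) :
    ∫ y in Ioi (0:ℝ), y / (y ^ α + c) =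
      α⁻¹ * (c ^ (2/α - 1) * (π / Real.sin (π * (2/α)))) := by
  have hα0 : (0:ℝ) < α := by linarith
  set a : ℝ := 2/α with ha
  have ha0 : 0 < a := by positivity
  have ha1 : a < 1 := by rw [ha, div_lt_one hα0]; linarith
  have hK := (key_Ioi a ha0 ha1).2
  have h1 : ∫ t in Ioi (0:ℝ), t ^ (a-1) / (c+t) = c ^ (a-1) * (π / Real.sin (π * a)) := by
    have hsub := integral_comp_mul_left_Ioi (fun t : ℝ => t ^ (a-1) / (c+t)) 0 hc
    rw [mul_zero] at hsub
    have hl : ∫ x in Ioi (0:ℝ), (c*x) ^ (a-1) / (c + c*x)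
        = ∫ x in Ioi (0:ℝ), c ^ (a-2) * (x ^ (a-1) / (1+x)) := by
      refine setIntegral_congr_fun measurableSet_Ioi (fun x hx => ?_)
      simp only [mem_Ioi] at hx
      have h1x : (0:ℝ) < 1 + x := by linarith
      rw [Real.mul_rpow hc.le hx.le, show c + c*x = c*(1+x) by ring]
      rw [show c ^ (a-2) = c ^ (a-1) / c by
        rw [eq_div_iff hc.ne', ← Real.rpow_add_one hc.ne']; congr 1; ring]
      field_simp
    rw [hl, MeasureTheory.integral_const_mul, hK, smul_eq_mul] at hsub
    calc ∫ t in Ioi (0:ℝ), t ^ (a-1) / (c+t)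
        = c * (c⁻¹ * ∫ t in Ioi (0:ℝ), t ^ (a-1) / (c+t)) := by
          rw [← mul_assoc, mul_inv_cancel₀ hc.ne', one_mul]
      _ = c * (c ^ (a-2) * (π / Real.sin (π * a))) := by rw [← hsub]
      _ = c ^ (a-1) * (π / Real.sin (π * a)) := by
          rw [← mul_assoc, show c * c ^ (a-2) = c ^ (a-1) by
            rw [mul_comm, ← Real.rpow_add_one hc.ne']; congr 1; ring]
  have hsub2 := integral_comp_rpow_Ioi (fun t : ℝ => t ^ (a-1) / (c+t)) hα0.ne'
  have hl2 : ∫ x in Ioi (0:ℝ), (|α| * x ^ (α-1)) • ((x^α) ^ (a-1) / (c + x^α))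
      = ∫ x in Ioi (0:ℝ), α * (x / (x^α + c)) := by
    refine setIntegral_congr_fun measurableSet_Ioi (fun x hx => ?_)
    simp only [mem_Ioi] at hx
    rw [smul_eq_mul, abs_of_pos hα0, ← Real.rpow_mul hx.le]
    have hxx : x ^ (α-1) * x ^ (α*(a-1)) = x := by
      rw [← Real.rpow_add hx, show α - 1 + α*(a-1) = α*a - 1 by ring, ha,
        mul_div_cancel₀ 2 hα0.ne']
      norm_num
    calc α * x ^ (α-1) * (x ^ (α*(a-1)) / (c + x^α))
        = α * ((x ^ (α-1) * x ^ (α*(a-1))) / (c + x^α)) := by ring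
      _ = α * (x / (x^α + c)) := by rw [hxx, add_comm]
  rw [hl2, MeasureTheory.integral_const_mul, h1] at hsub2
  rw [← hsub2, ← mul_assoc, inv_mul_cancel₀ hα0.ne', one_mul]

/-- For `α > 2`, `s > 0`, `p ∈ (0,1)`, `δ = 2/α`, the function
`x ↦ p·s/(‖x‖^α + (1−p)·s)` is Lebesgue integrable on `ℝ²` and
`∫_{ℝ²} p·s/(‖x‖^α + (1−p)·s) dx = π·C(δ)·p·s^δ/(1−p)^(1−δ)` with
`C(δ) = πδ/sin(πδ)`. -/
theorem stmt_2 (α s p : ℝ) (hα : 2 < α) (hs : 0 < s) (hp : p ∈ Set.Ioo (0 : ℝ) 1) :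
    Integrable (fun x : EuclideanSpace ℝ (Fin 2) => p * s / (‖x‖ ^ α + (1 - p) * s)) ∧
    ∫ x : EuclideanSpace ℝ (Fin 2), p * s / (‖x‖ ^ α + (1 - p) * s) =
      π * (π * (2 / α) / Real.sin (π * (2 / α))) * p * s ^ (2 / α) /
        (1 - p) ^ (1 - 2 / α) := by
  obtain ⟨hp0, hp1⟩ := hp
  have h1p : (0:ℝ) < 1 - p := by linarith
  have hα0 : (0:ℝ) < α := by linarith
  set c : ℝ := (1 - p) * s with hcdef
  have hc : 0 < c := mul_pos h1p hs
  have hden : ∀ x : EuclideanSpace ℝ (Fin 2), 0 < ‖x‖ ^ α + c := fun x =>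
    add_pos_of_nonneg_of_pos (Real.rpow_nonneg (norm_nonneg x) α) hc
  have hcont : Continuous (fun x : EuclideanSpace ℝ (Fin 2) => p * s / (‖x‖ ^ α + c)) :=
    continuous_const.div ((continuous_norm.rpow_const (fun x => Or.inr hα0.le)).add
      continuous_const) (fun x => (hden x).ne')
  constructor
  · have hfr : ((Module.finrank ℝ (EuclideanSpace ℝ (Fin 2)) : ℝ)) < α := by
      simp only [finrank_euclideanSpace, Fintype.card_fin]
      exact_mod_cast hα
    have hbound : Integrable (fun x : EuclideanSpace ℝ (Fin 2) =>
        (p * s * (2 ^ α * (1 + c⁻¹))) * (1 + ‖x‖) ^ (-α)) :=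
      (integrable_one_add_norm hfr).const_mul _
    refine hbound.mono' hcont.aestronglyMeasurable ?_
    filter_upwards with x
    set r : ℝ := ‖x‖ with hrdef
    have hr : 0 ≤ r := norm_nonneg x
    have h1r : (0:ℝ) < 1 + r := by linarith
    have hrα : 0 ≤ r ^ α := Real.rpow_nonneg hr α
    rw [Real.norm_of_nonneg (by positivity)]
    have hmax : (1 + r) ^ α ≤ 2 ^ α * max 1 (r ^ α) := by
      have h1 : 1 + r ≤ 2 * max 1 r := by
        rcases le_total r 1 with h | h
        · rw [max_eq_left h]; linarith
        · rw [max_eq_right h]; linarith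
      calc (1 + r) ^ α ≤ (2 * max 1 r) ^ α :=
            Real.rpow_le_rpow (by positivity) h1 hα0.le
        _ = 2 ^ α * (max 1 r) ^ α :=
            Real.mul_rpow (by norm_num) (le_max_of_le_left zero_le_one)
        _ = 2 ^ α * max 1 (r ^ α) := by
            rcases le_total r 1 with h | h
            · rw [max_eq_left h, Real.one_rpow, max_eq_left]
              calc r ^ α ≤ 1 ^ α := Real.rpow_le_rpow hr h hα0.le
                _ = 1 := Real.one_rpow α
            · rw [max_eq_right h, max_eq_right]
              calc (1:ℝ) = 1 ^ α := (Real.one_rpow α).symm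
                _ ≤ r ^ α := Real.rpow_le_rpow zero_le_one h hα0.le
    have hmax2 : max 1 (r ^ α) ≤ (1 + c⁻¹) * (r ^ α + c) := by
      have hci : 0 < c⁻¹ := inv_pos.mpr hc
      have hcc : c⁻¹ * c = 1 := inv_mul_cancel₀ hc.ne'
      refine max_le ?_ ?_ <;> nlinarith [mul_nonneg hci.le hrα]
    have key : (1 + r) ^ α ≤ 2 ^ α * (1 + c⁻¹) * (r ^ α + c) := by
      calc (1 + r) ^ α ≤ 2 ^ α * max 1 (r ^ α) := hmax
        _ ≤ 2 ^ α * ((1 + c⁻¹) * (r ^ α + c)) :=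
            mul_le_mul_of_nonneg_left hmax2 (by positivity)
        _ = 2 ^ α * (1 + c⁻¹) * (r ^ α + c) := by ring
    have hA : (0:ℝ) < (1 + r) ^ α := Real.rpow_pos_of_pos h1r α
    calc p * s / (r ^ α + c) ≤ p * s * (2 ^ α * (1 + c⁻¹)) / (1 + r) ^ α := by
          rw [div_le_div_iff₀ (hden x) hA]
          calc p * s * (1 + r) ^ α ≤ p * s * (2 ^ α * (1 + c⁻¹) * (r ^ α + c)) :=
                mul_le_mul_of_nonneg_left key (by positivity)
            _ = p * s * (2 ^ α * (1 + c⁻¹)) * (r ^ α + c) := by ring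
      _ = p * s * (2 ^ α * (1 + c⁻¹)) * (1 + r) ^ (-α) := by
          rw [Real.rpow_neg h1r.le, div_eq_mul_inv]
  · have h2d := MeasureTheory.integral_fun_norm_addHaar
      (volume : Measure (EuclideanSpace ℝ (Fin 2))) (fun t => p * s / (t ^ α + c))
    simp only [finrank_euclideanSpace, Fintype.card_fin] at h2d
    have hvol : (volume (Metric.ball (0 : EuclideanSpace ℝ (Fin 2)) 1)).toReal = π := by
      rw [EuclideanSpace.volume_ball]
      simp only [Fintype.card_fin]
      norm_num [Real.sq_sqrt Real.pi_nonneg, Real.Gamma_two]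
      exact Real.pi_nonneg
    have hinner : ∫ y in Ioi (0:ℝ), y ^ (2 - 1 : ℕ) • (p * s / (y ^ α + c))
        = p * s * (α⁻¹ * (c ^ (2/α - 1) * (π / Real.sin (π * (2/α))))) := by
      have : ∫ y in Ioi (0:ℝ), y ^ (2 - 1 : ℕ) • (p * s / (y ^ α + c))
          = ∫ y in Ioi (0:ℝ), p * s * (y / (y ^ α + c)) := by
        refine setIntegral_congr_fun measurableSet_Ioi (fun y hy => ?_)
        simp only [pow_one, smul_eq_mul]
        ring
      rw [this, MeasureTheory.integral_const_mul, J_val α c hα hc]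
    rw [h2d, hinner, measureReal_def, hvol]
    have hcs : c ^ (2/α - 1) = (1 - p) ^ (2/α - 1) * s ^ (2/α - 1) :=
      Real.mul_rpow h1p.le hs.le
    have hss : s * s ^ (2/α - 1) = s ^ (2/α) := by
      rw [mul_comm, ← Real.rpow_add_one hs.ne']; congr 1; ring
    have hps : (1 - p) ^ ((2:ℝ)/α - 1) = ((1 - p) ^ ((1:ℝ) - 2/α))⁻¹ := by
      rw [show (2:ℝ)/α - 1 = -(1 - 2/α) by ring, Real.rpow_neg h1p.le]
    have hδ1 : (2:ℝ)/α < 1 := by rw [div_lt_one hα0]; linarith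
    have hsin : 0 < Real.sin (π * (2/α)) := by
      apply Real.sin_pos_of_pos_of_lt_pi
      · positivity
      · nlinarith [Real.pi_pos]
    have hppow : (0:ℝ) < (1 - p) ^ ((1:ℝ) - 2/α) := Real.rpow_pos_of_pos h1p _
    rw [hcs, hps, nsmul_eq_mul, smul_eq_mul, show s ^ ((2:ℝ)/α) = s * s ^ ((2:ℝ)/α - 1) from hss.symm]
    push_cast
    ring
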